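/- arXiv:1204.1438 — 2 statements merged into one kernel-verified Lean document; each statement's English description precedes it below -/
import Mathlib

section
/- Let G be a graph of order n with maximum degree at least two, and let H be a spanning subgraph of G with γ_R(H) = γ_R(G) and Δ(H) ≥ 2. If K = E(G) − E(H), then b_R(H) ≤ b_R(G) ≤ b_R(H) + |K|. -/
open SimpleGraph Finset

/-- A Roman dominating function: values in {0,1,2}, every 0-vertex has a neighbor with value 2. -/
def IsRDF {V : Type*} (G : SimpleGraph V) (f : V → ℕ) : Prop :=
  (∀ v, f v ≤ 2) ∧ ∀ v, f v = 0 → ∃ u, G.Adj v u ∧ f u = 2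

/-- The Roman domination number: minimum weight of a Roman dominating function. -/
noncomputable def romanDom {V : Type*} [Fintype V] (G : SimpleGraph V) : ℕ :=
  sInf {k | ∃ f : V → ℕ, IsRDF G f ∧ ∑ v, f v = k}

/-- A dominating set. -/
def IsDomSet {V : Type*} (G : SimpleGraph V) (S : Set V) : Prop :=
  ∀ v, v ∈ S ∨ ∃ u ∈ S, G.Adj u v

/-- The domination number. -/
noncomputable def domNum {V : Type*} [Fintype V] (G : SimpleGraph V) : ℕ :=
  sInf {k | ∃ S : Set V, IsDomSet G S ∧ S.ncard = k}

/-- Degree of a vertex. -/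
noncomputable def deg {V : Type*} (G : SimpleGraph V) (v : V) : ℕ :=
  (G.neighborSet v).ncard

/-- Maximum degree. -/
noncomputable def maxDeg {V : Type*} (G : SimpleGraph V) : ℕ :=
  sSup {d | ∃ v, deg G v = d}

/-- Minimum degree. -/
noncomputable def minDeg {V : Type*} (G : SimpleGraph V) : ℕ :=
  sInf {d | ∃ v, deg G v = d}

/-- The Roman bondage number: minimum size of an edge set whose deletion increases `romanDom`. -/
noncomputable def romanBondage {V : Type*} [Fintype V] (G : SimpleGraph V) : ℕ :=
  sInf {k | ∃ B : Set (Sym2 V), B ⊆ G.edgeSet ∧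
    romanDom (G.deleteEdges B) > romanDom G ∧ B.ncard = k}

/-- The bondage number: minimum size of an edge set whose deletion increases `domNum`. -/
noncomputable def bondage {V : Type*} [Fintype V] (G : SimpleGraph V) : ℕ :=
  sInf {k | ∃ B : Set (Sym2 V), B ⊆ G.edgeSet ∧
    domNum (G.deleteEdges B) > domNum G ∧ B.ncard = k}

/-- A vertex cover. -/
def IsVC {V : Type*} (G : SimpleGraph V) (S : Set V) : Prop :=
  ∀ u v, G.Adj u v → u ∈ S ∨ v ∈ S

/-- The vertex covering number. -/
noncomputable def vcNum {V : Type*} [Fintype V] (G : SimpleGraph V) : ℕ :=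
  sInf {k | ∃ S : Set V, IsVC G S ∧ S.ncard = k}

lemma romanDomSet_nonempty {V : Type*} [Fintype V] (G : SimpleGraph V) :
    {k | ∃ f : V → ℕ, IsRDF G f ∧ ∑ v, f v = k}.Nonempty :=
  ⟨_, fun _ => 2, ⟨fun _ => le_refl 2, fun v h => by simp at h⟩, rfl⟩

lemma romanDom_anti {V : Type*} [Fintype V] {G H : SimpleGraph V} (h : H ≤ G) :
    romanDom G ≤ romanDom H := by
  obtain ⟨f, hf, hsum⟩ := Nat.sInf_mem (romanDomSet_nonempty H)
  exact Nat.sInf_le ⟨f, ⟨hf.1, fun v hv => (hf.2 v hv).imp fun u hu => ⟨h hu.1, hu.2⟩⟩, hsum⟩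

lemma romanDom_bot {V : Type*} [Fintype V] :
    romanDom (⊥ : SimpleGraph V) = Fintype.card V := by
  apply le_antisymm
  · exact Nat.sInf_le ⟨fun _ => 1, ⟨fun v => one_le_two, fun v h => absurd h one_ne_zero⟩,
      by simp⟩
  · obtain ⟨f, hf, hsum⟩ := Nat.sInf_mem (romanDomSet_nonempty (⊥ : SimpleGraph V))
    have key : Fintype.card V ≤ ∑ v, f v := by
      calc Fintype.card V = ∑ _v : V, 1 := by simp
      _ ≤ ∑ v, f v := Finset.sum_le_sum fun v _ => by
          rcases Nat.eq_zero_or_pos (f v) with h | h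
          · obtain ⟨u, hu, _⟩ := hf.2 v h; exact absurd hu (by simp)
          · exact h
    exact le_of_le_of_eq key hsum

lemma deleteEdges_edgeSet_eq_bot {V : Type*} (G : SimpleGraph V) :
    G.deleteEdges G.edgeSet = ⊥ := by
  ext u v
  simp [SimpleGraph.deleteEdges_adj]

lemma romanDom_lt_card {V : Type*} [Fintype V] (G : SimpleGraph V) (hΔ : 2 ≤ maxDeg G) :
    romanDom G < Fintype.card V := by
  classical
  -- get a vertex of degree ≥ 2
  have hS : {d | ∃ v, deg G v = d}.Nonempty := by
    rcases isEmpty_or_nonempty V with hE | hE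
    · exfalso
      have : {d | ∃ v : V, deg G v = d} = ∅ := by
        ext d; simp
      rw [maxDeg, this] at hΔ
      simp [csSup_empty] at hΔ
    · exact ⟨deg G Classical.ofNonempty, _, rfl⟩
  have hbdd : BddAbove {d | ∃ v, deg G v = d} := by
    refine ⟨Fintype.card V, fun d hd => ?_⟩
    obtain ⟨v, rfl⟩ := hd
    calc deg G v ≤ (Set.univ : Set V).ncard :=
        Set.ncard_le_ncard (Set.subset_univ _) (Set.toFinite _)
    _ = Fintype.card V := by rw [Set.ncard_univ, Nat.card_eq_fintype_card]
  have hmem : maxDeg G ∈ {d | ∃ v, deg G v = d} := Nat.sSup_mem hS hbdd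
  obtain ⟨v, hv⟩ := hmem
  have hv2 : 1 < (G.neighborSet v).ncard := by
    have : deg G v = (G.neighborSet v).ncard := rfl
    omega
  obtain ⟨u₁, u₂, hu₁, hu₂, hne⟩ :=
    (Set.one_lt_ncard_iff (Set.toFinite _)).mp hv2
  have hadj₁ : G.Adj v u₁ := hu₁
  have hadj₂ : G.Adj v u₂ := hu₂
  have hvu₁ : v ≠ u₁ := hadj₁.ne
  have hvu₂ : v ≠ u₂ := hadj₂.ne
  -- the RDF
  set f : V → ℕ := fun w => if w = u₁ ∨ w = u₂ then 0 else if w = v then 2 else 1 with hfdef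
  have hfv : f v = 2 := by simp [hfdef, hvu₁, hvu₂]
  have hRDF : IsRDF G f := by
    constructor
    · intro w; simp only [hfdef]; split <;> [omega; (split <;> omega)]
    · intro w hw
      have : w = u₁ ∨ w = u₂ := by
        by_contra hc
        simp only [hfdef, if_neg hc] at hw
        split at hw <;> omega
      rcases this with rfl | rfl
      · exact ⟨v, hadj₁.symm, hfv⟩
      · exact ⟨v, hadj₂.symm, hfv⟩
  have hle : romanDom G ≤ ∑ w, f w := Nat.sInf_le ⟨f, hRDF, rfl⟩
  -- compute the sum
  have hT : ({v, u₁, u₂} : Finset V).card = 3 := by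
    rw [Finset.card_insert_of_notMem (by simp [hvu₁, hvu₂]),
      Finset.card_insert_of_notMem (by simp [hne]), Finset.card_singleton]
  have hsumT : ∑ w ∈ ({v, u₁, u₂} : Finset V), f w = 2 := by
    rw [Finset.sum_insert (by simp [hvu₁, hvu₂]), Finset.sum_insert (by simp [hne]),
      Finset.sum_singleton]
    simp [hfdef, hvu₁, hvu₂]
  have hsumC : ∑ w ∈ ({v, u₁, u₂} : Finset V)ᶜ, f w = (({v, u₁, u₂} : Finset V)ᶜ).card := by
    rw [Finset.card_eq_sum_ones]
    refine Finset.sum_congr rfl fun w hw => ?_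
    simp only [Finset.mem_compl, Finset.mem_insert, Finset.mem_singleton, not_or] at hw
    simp [hfdef, hw.1, hw.2.1, hw.2.2]
  have hcard3 : 3 ≤ Fintype.card V := by
    rw [← hT]; exact Finset.card_le_univ _
  have htotal : ∑ w, f w = Fintype.card V - 1 := by
    rw [← Finset.sum_add_sum_compl ({v, u₁, u₂} : Finset V), hsumT, hsumC,
      Finset.card_compl, hT]
    omega
  omega

lemma bondageSet_nonempty {V : Type*} [Fintype V] (G : SimpleGraph V) (hΔ : 2 ≤ maxDeg G) :
    {k | ∃ B : Set (Sym2 V), B ⊆ G.edgeSet ∧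
      romanDom (G.deleteEdges B) > romanDom G ∧ B.ncard = k}.Nonempty := by
  refine ⟨G.edgeSet.ncard, G.edgeSet, subset_rfl, ?_, rfl⟩
  rw [deleteEdges_edgeSet_eq_bot, romanDom_bot]
  exact romanDom_lt_card G hΔ

theorem stmt5 {V : Type*} [Fintype V] (G H : SimpleGraph V)
    (hsub : H ≤ G) (hΔG : 2 ≤ maxDeg G) (hΔH : 2 ≤ maxDeg H)
    (hγ : romanDom H = romanDom G) (K : Set (Sym2 V))
    (hK : K = G.edgeSet \ H.edgeSet) :
    romanBondage H ≤ romanBondage G ∧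
      romanBondage G ≤ romanBondage H + K.ncard := by
  have hAdj : ∀ u v, H.Adj u v → G.Adj u v := fun u v h => hsub h
  constructor
  · -- romanBondage H ≤ romanBondage G
    obtain ⟨B, hBsub, hBlt, hBcard⟩ := Nat.sInf_mem (bondageSet_nonempty G hΔG)
    have hdel : H.deleteEdges (B ∩ H.edgeSet) = H.deleteEdges B := by
      ext u v
      simp only [SimpleGraph.deleteEdges_adj, Set.mem_inter_iff, SimpleGraph.mem_edgeSet]
      constructor
      · rintro ⟨h1, h2⟩; exact ⟨h1, fun hB => h2 ⟨hB, h1⟩⟩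
      · rintro ⟨h1, h2⟩; exact ⟨h1, fun hB => h2 hB.1⟩
    have hmono : H.deleteEdges B ≤ G.deleteEdges B := by
      intro u v h
      rw [SimpleGraph.deleteEdges_adj] at h ⊢
      exact ⟨hAdj u v h.1, h.2⟩
    have hgt : romanDom (H.deleteEdges (B ∩ H.edgeSet)) > romanDom H := by
      rw [hdel, hγ]
      exact lt_of_lt_of_le hBlt (romanDom_anti hmono)
    have hmem : romanBondage H ≤ (B ∩ H.edgeSet).ncard :=
      Nat.sInf_le ⟨B ∩ H.edgeSet, Set.inter_subset_right, hgt, rfl⟩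
    calc romanBondage H ≤ (B ∩ H.edgeSet).ncard := hmem
    _ ≤ B.ncard := Set.ncard_le_ncard Set.inter_subset_left (Set.toFinite _)
    _ = romanBondage G := hBcard
  · -- romanBondage G ≤ romanBondage H + K.ncard
    obtain ⟨B, hBsub, hBlt, hBcard⟩ := Nat.sInf_mem (bondageSet_nonempty H hΔH)
    have hdel : G.deleteEdges (B ∪ K) = H.deleteEdges B := by
      ext u v
      simp only [SimpleGraph.deleteEdges_adj, hK, Set.mem_union, Set.mem_diff,
        SimpleGraph.mem_edgeSet, not_or, not_and, not_not]
      constructor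
      · rintro ⟨h1, h2, h3⟩; exact ⟨h3 h1, h2⟩
      · rintro ⟨h1, h2⟩; exact ⟨hAdj u v h1, h2, fun _ => h1⟩
    have hBG : B ∪ K ⊆ G.edgeSet := by
      rw [hK]
      refine Set.union_subset (hBsub.trans ?_) Set.diff_subset
      exact SimpleGraph.edgeSet_mono hsub
    have hgt : romanDom (G.deleteEdges (B ∪ K)) > romanDom G := by
      rw [hdel, ← hγ]; exact hBlt
    have hmem : romanBondage G ≤ (B ∪ K).ncard :=
      Nat.sInf_le ⟨B ∪ K, hBG, hgt, rfl⟩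
    calc romanBondage G ≤ (B ∪ K).ncard := hmem
    _ ≤ B.ncard + K.ncard := Set.ncard_union_le _ _
    _ = romanBondage H + K.ncard := by
        have hBcard' : B.ncard = romanBondage H := hBcard
        rw [hBcard']
end

section
/- Let G be a connected graph of order n ≥ 3 such that γ_R(G) = γ(G) + 1. If B ⊆ E(G) satisfies γ_R(G − B) = γ_R(G), then Δ(G − B) = Δ(G). -/
open SimpleGraph Finset

section Helpers

variable {V : Type*} [Fintype V]

lemma deg_le_card (G : SimpleGraph V) (v : V) : deg G v ≤ Fintype.card V := by
  have := Set.ncard_le_ncard (Set.subset_univ (G.neighborSet v)) (Set.toFinite _)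
  rwa [Set.ncard_univ, Nat.card_eq_fintype_card] at this

lemma romanDom_set_nonempty (G : SimpleGraph V) :
    {k | ∃ f : V → ℕ, IsRDF G f ∧ ∑ v, f v = k}.Nonempty :=
  ⟨Fintype.card V, fun _ => 1, ⟨fun _ => one_le_two, fun v h => absurd h one_ne_zero⟩, by simp⟩

lemma romanDom_spec (G : SimpleGraph V) :
    ∃ f : V → ℕ, IsRDF G f ∧ ∑ v, f v = romanDom G :=
  Nat.sInf_mem (romanDom_set_nonempty G)

lemma domNum_spec (G : SimpleGraph V) :
    ∃ S : Set V, IsDomSet G S ∧ S.ncard = domNum G := by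
  have hne : {k | ∃ S : Set V, IsDomSet G S ∧ S.ncard = k}.Nonempty :=
    ⟨(Set.univ : Set V).ncard, Set.univ, fun v => Or.inl trivial, rfl⟩
  exact Nat.sInf_mem hne

lemma domNum_le (G : SimpleGraph V) {S : Set V} (hS : IsDomSet G S) :
    domNum G ≤ S.ncard :=
  Nat.sInf_le ⟨S, hS, rfl⟩

lemma domNum_add_deg_le (G : SimpleGraph V) (v : V) :
    domNum G + deg G v ≤ Fintype.card V := by
  have hdom : IsDomSet G (G.neighborSet v)ᶜ := by
    intro u
    by_cases hu : u ∈ G.neighborSet v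
    · exact Or.inr ⟨v, fun h => G.irrefl h, hu⟩
    · exact Or.inl hu
  have h1 : domNum G ≤ ((G.neighborSet v)ᶜ : Set V).ncard := domNum_le G hdom
  have h2 := Set.ncard_add_ncard_compl (G.neighborSet v)
  rw [Nat.card_eq_fintype_card] at h2
  unfold deg
  omega

lemma sum_eq_filter (f : V → ℕ) (hf : ∀ v, f v ≤ 2) :
    ∑ v, f v = (univ.filter (fun v => 1 ≤ f v)).card
      + (univ.filter (fun v => f v = 2)).card := by
  rw [Finset.card_filter, Finset.card_filter, ← Finset.sum_add_distrib]
  refine Finset.sum_congr rfl fun v _ => ?_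
  have := hf v
  split_ifs <;> omega

lemma support_dom (G : SimpleGraph V) {f : V → ℕ} (hf : IsRDF G f) :
    IsDomSet G {v | 1 ≤ f v} := by
  intro v
  by_cases h : 1 ≤ f v
  · exact Or.inl h
  · obtain ⟨u, hadj, hu2⟩ := hf.2 v (by omega)
    exact Or.inr ⟨u, by simp [hu2], hadj.symm⟩

lemma support_ncard (f : V → ℕ) :
    ({v | 1 ≤ f v} : Set V).ncard = (univ.filter (fun v => 1 ≤ f v)).card := by
  rw [← Set.ncard_coe_finset]
  congr 1
  ext v
  simp

lemma keyB (H : SimpleGraph V) (hd : domNum H + 2 ≤ Fintype.card V)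
    (h : romanDom H = domNum H + 1) :
    ∃ v, deg H v = Fintype.card V - domNum H := by
  obtain ⟨f, hf, hw⟩ := romanDom_spec H
  have hsum := sum_eq_filter f hf.1
  have hγS : domNum H ≤ (univ.filter (fun v => 1 ≤ f v)).card := by
    have := domNum_le H (support_dom H hf)
    rwa [support_ncard] at this
  have hw' : (univ.filter (fun v => 1 ≤ f v)).card
      + (univ.filter (fun v => f v = 2)).card = domNum H + 1 := by
    rw [← hsum, hw, h]
  rcases Nat.lt_or_ge (univ.filter (fun v => f v = 2)).card 1 with h0 | h1
  · exfalso
    have hT0 : ∀ v, f v ≠ 2 := by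
      intro v hv
      have : v ∈ univ.filter (fun v => f v = 2) := by simp [hv]
      have := Finset.card_pos.mpr ⟨v, this⟩
      omega
    have hpos : ∀ v, 1 ≤ f v := by
      intro v
      rcases Nat.eq_zero_or_pos (f v) with h' | h'
      · obtain ⟨u, _, hu2⟩ := hf.2 v h'
        exact absurd hu2 (hT0 u)
      · exact h'
    have hSuniv : (univ.filter (fun v => 1 ≤ f v)) = univ :=
      Finset.filter_true_of_mem fun v _ => hpos v
    rw [hSuniv, Finset.card_univ] at hw'
    omega
  · have hTcard : (univ.filter (fun v => f v = 2)).card = 1 := by omega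
    obtain ⟨v, hv⟩ := Finset.card_eq_one.mp hTcard
    have hScard : (univ.filter (fun v => 1 ≤ f v)).card = domNum H := by omega
    have hsub : ({u | f u = 0} : Set V) ⊆ H.neighborSet v := by
      intro u hu
      obtain ⟨w, hadj, hw2⟩ := hf.2 u hu
      have hwT : w ∈ univ.filter (fun v => f v = 2) := by simp [hw2]
      rw [hv, Finset.mem_singleton] at hwT
      subst hwT
      exact hadj.symm
    have hcompl : ({u | f u = 0} : Set V) = ({u | 1 ≤ f u} : Set V)ᶜ := by
      ext u; simp only [Set.mem_setOf_eq, Set.mem_compl_iff, not_le]; omega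
    have h0card : ({u | f u = 0} : Set V).ncard = Fintype.card V - domNum H := by
      have h2 := Set.ncard_add_ncard_compl ({u | 1 ≤ f u} : Set V)
      rw [Nat.card_eq_fintype_card, support_ncard, hScard] at h2
      rw [hcompl]
      omega
    have hge : Fintype.card V - domNum H ≤ deg H v := by
      rw [← h0card]
      exact Set.ncard_le_ncard hsub (Set.toFinite _)
    have hle := domNum_add_deg_le H v
    exact ⟨v, by omega⟩

lemma romanDom_lb (H : SimpleGraph V) :
    domNum H + 1 ≤ romanDom H ∨ Fintype.card V ≤ romanDom H := by
  obtain ⟨f, hf, hw⟩ := romanDom_spec H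
  have hsum := sum_eq_filter f hf.1
  have hγS : domNum H ≤ (univ.filter (fun v => 1 ≤ f v)).card := by
    have := domNum_le H (support_dom H hf)
    rwa [support_ncard] at this
  rcases Nat.lt_or_ge (univ.filter (fun v => f v = 2)).card 1 with h0 | h1
  · right
    have hT0 : ∀ v, f v ≠ 2 := by
      intro v hv
      have : v ∈ univ.filter (fun v => f v = 2) := by simp [hv]
      have := Finset.card_pos.mpr ⟨v, this⟩
      omega
    have hpos : ∀ v, 1 ≤ f v := by
      intro v
      rcases Nat.eq_zero_or_pos (f v) with h' | h'
      · obtain ⟨u, _, hu2⟩ := hf.2 v h'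
        exact absurd hu2 (hT0 u)
      · exact h'
    have hSuniv : (univ.filter (fun v => 1 ≤ f v)) = univ :=
      Finset.filter_true_of_mem fun v _ => hpos v
    rw [hSuniv, Finset.card_univ] at hsum
    omega
  · left; omega

lemma domNum_le_deleteEdges (G : SimpleGraph V) (B : Set (Sym2 V)) :
    domNum G ≤ domNum (G.deleteEdges B) := by
  obtain ⟨S, hS, hcard⟩ := domNum_spec (G.deleteEdges B)
  rw [← hcard]
  apply domNum_le
  intro v
  rcases hS v with h | ⟨u, hu, hadj⟩
  · exact Or.inl h
  · exact Or.inr ⟨u, hu, (SimpleGraph.deleteEdges_adj.mp hadj).1⟩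

lemma deg_deleteEdges_le (G : SimpleGraph V) (B : Set (Sym2 V)) (v : V) :
    deg (G.deleteEdges B) v ≤ deg G v := by
  apply Set.ncard_le_ncard _ (Set.toFinite _)
  intro u hu
  exact (SimpleGraph.deleteEdges_adj.mp hu).1

lemma le_maxDeg (G : SimpleGraph V) (v : V) : deg G v ≤ maxDeg G :=
  le_csSup ⟨Fintype.card V, fun d ⟨u, hu⟩ => hu ▸ deg_le_card G u⟩ ⟨v, rfl⟩

lemma maxDeg_le [Nonempty V] (G : SimpleGraph V) {m : ℕ} (h : ∀ v, deg G v ≤ m) :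
    maxDeg G ≤ m :=
  csSup_le ⟨deg G (Classical.arbitrary V), Classical.arbitrary V, rfl⟩
    (by rintro d ⟨v, rfl⟩; exact h v)

lemma exists_deg_two (G : SimpleGraph V) (hconn : G.Connected)
    (hn : 3 ≤ Fintype.card V) : ∃ x, 2 ≤ deg G x := by
  classical
  by_contra hc
  push_neg at hc
  have hdeg : ∀ x, deg G x ≤ 1 := fun x => by have := hc x; omega
  have huniq : ∀ x y z : V, G.Adj x y → G.Adj x z → y = z := by
    intro x y z hy hz
    by_contra hne
    have h2 : 1 < (G.neighborSet x).ncard :=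
      (Set.one_lt_ncard (Set.toFinite _)).mpr ⟨y, hy, z, hz, hne⟩
    have := hdeg x
    unfold deg at this
    omega
  have hnonempty : Nonempty V := Fintype.card_pos_iff.mp (by omega)
  obtain ⟨a⟩ := hnonempty
  obtain ⟨b, hb⟩ := Fintype.exists_ne_of_one_lt_card (by omega) a
  have hedge : ∃ c, G.Adj a c := by
    obtain ⟨p⟩ := hconn.preconnected a b
    cases p with
    | nil => exact absurd rfl hb
    | cons h _ => exact ⟨_, h⟩
  obtain ⟨c, hac⟩ := hedge
  have hclose : ∀ {x y : V} (q : G.Walk x y), (x = a ∨ x = c) → (y = a ∨ y = c) := by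
    intro x y q
    induction q with
    | nil => exact id
    | cons h q ih =>
      rintro (rfl | rfl)
      · exact ih (Or.inr (huniq _ _ _ h hac))
      · exact ih (Or.inl (huniq _ _ _ h hac.symm))
  have hall : ∀ t, t = a ∨ t = c := fun t => by
    obtain ⟨q⟩ := hconn.preconnected a t
    exact hclose q (Or.inl rfl)
  have hsub : (univ : Finset V) ⊆ {a, c} := fun t _ => by
    rcases hall t with rfl | rfl <;> simp
  have h1 := Finset.card_le_card hsub
  have h2 : ({a, c} : Finset V).card ≤ 2 := by
    apply le_trans (Finset.card_insert_le _ _)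
    simp
  rw [Finset.card_univ] at h1
  omega

end Helpers

theorem stmt7 {V : Type*} [Fintype V] (G : SimpleGraph V)
    (hconn : G.Connected) (hn : 3 ≤ Fintype.card V)
    (hγ : romanDom G = domNum G + 1)
    (B : Set (Sym2 V)) (hB : B ⊆ G.edgeSet)
    (heq : romanDom (G.deleteEdges B) = romanDom G) :
    maxDeg (G.deleteEdges B) = maxDeg G := by
  have hne : Nonempty V := Fintype.card_pos_iff.mp (by omega)
  obtain ⟨x, hx⟩ := exists_deg_two G hconn hn
  have hxd := domNum_add_deg_le G x
  have hd : domNum G + 2 ≤ Fintype.card V := by omega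
  obtain ⟨v, hv⟩ := keyB G hd hγ
  have hmaxG : maxDeg G = Fintype.card V - domNum G := by
    refine le_antisymm (maxDeg_le G fun u => ?_) (hv ▸ le_maxDeg G v)
    have := domNum_add_deg_le G u
    omega
  have hmono := domNum_le_deleteEdges G B
  have hG'γ : domNum (G.deleteEdges B) = domNum G := by
    rcases romanDom_lb (G.deleteEdges B) with h1 | h1 <;> omega
  obtain ⟨w, hw⟩ := keyB (G.deleteEdges B) (by omega) (by rw [heq, hγ, hG'γ])
  refine le_antisymm (maxDeg_le _ fun u => ?_) ?_
  · calc deg (G.deleteEdges B) u ≤ deg G u := deg_deleteEdges_le G B u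
      _ ≤ maxDeg G := le_maxDeg G u
  · rw [hmaxG, ← hG'γ, ← hw]
    exact le_maxDeg _ w
end
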